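/- Let K ⊆ ℝ² be a nonempty compact convex set and m ≥ 1 a natural number. Suppose that for every natural number n, K is invariant under the rotation about the origin by angle 2π/(2ⁿ·m), i.e. R_{2π/(2ⁿm)}(K) = K. Then K is a closed disc centered at the origin: there exists R ≥ 0 such that K = {x ∈ ℝ² : |x| ≤ R}. -/

import Mathlib

open Complex Filter

theorem stmt_14 (K : Set ℂ) (hne : K.Nonempty) (hKcomp : IsCompact K)
    (hKconv : Convex ℝ K) (m : ℕ) (hm : 1 ≤ m)
    (hrot : ∀ n : ℕ,
      (fun x : ℂ => Complex.exp ((2 * Real.pi / (2 ^ n * m) : ℝ) * Complex.I) * x) '' K = K) :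
    ∃ R : ℝ, 0 ≤ R ∧ K = {x : ℂ | ‖x‖ ≤ R} := by
  classical
  -- The subgroup of angles whose rotation preserves K
  set S : AddSubgroup ℝ :=
    { carrier := {θ : ℝ | (fun x : ℂ => Complex.exp ((θ : ℂ) * Complex.I) * x) '' K = K}
      zero_mem' := by simp
      add_mem' := by
        intro a b ha hb
        simp only [Set.mem_setOf_eq] at ha hb ⊢
        have hfun : (fun x : ℂ => Complex.exp (((a + b : ℝ) : ℂ) * Complex.I) * x)
            = (fun x : ℂ => Complex.exp ((a : ℂ) * Complex.I) * x)
              ∘ (fun x : ℂ => Complex.exp ((b : ℂ) * Complex.I) * x) := by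
          funext x
          simp only [Function.comp_apply, ← mul_assoc, ← Complex.exp_add]
          push_cast
          ring_nf
        rw [hfun, Set.image_comp, hb, ha]
      neg_mem' := by
        intro a ha
        simp only [Set.mem_setOf_eq] at ha ⊢
        have := congrArg (fun s => (fun x : ℂ => Complex.exp (((-a : ℝ) : ℂ) * Complex.I) * x) '' s) ha
        simp only [Set.image_image, ← mul_assoc, ← Complex.exp_add] at this
        have h0 : ((-a : ℝ) : ℂ) * Complex.I + (a : ℂ) * Complex.I = 0 := by push_cast; ring
        rw [h0, Complex.exp_zero] at this
        simpa using this.symm } with hSdef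
  have hmem : ∀ n : ℕ, (2 * Real.pi / (2 ^ n * m) : ℝ) ∈ S := fun n => hrot n
  -- S is dense
  have hdense : Dense (S : Set ℝ) := by
    apply AddSubgroup.dense_of_not_isolated_zero
    intro ε hε
    obtain ⟨n, hn⟩ := pow_unbounded_of_one_lt (2 * Real.pi / (ε * m)) (one_lt_two (α := ℝ))
    refine ⟨2 * Real.pi / (2 ^ n * m), hmem n, ?_, ?_⟩
    · positivity
    · rw [div_lt_iff₀ (by positivity)]
      have hm' : (0:ℝ) < m := by exact_mod_cast hm
      calc 2 * Real.pi = (2 * Real.pi / (ε * m)) * (ε * m) := by field_simp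
        _ < 2 ^ n * (ε * m) := by
            apply mul_lt_mul_of_pos_right hn (by positivity)
        _ = ε * (2 ^ n * m) := by ring
  -- Every rotation maps K into K
  have hAll : ∀ (θ : ℝ), ∀ x ∈ K, Complex.exp ((θ : ℂ) * Complex.I) * x ∈ K := by
    intro θ x hx
    have hθ : θ ∈ closure (S : Set ℝ) := hdense θ
    obtain ⟨u, hu, hlim⟩ := mem_closure_iff_seq_limit.1 hθ
    have hcont : Continuous fun t : ℝ => Complex.exp ((t : ℂ) * Complex.I) * x := by
      continuity
    have htend : Tendsto (fun k => Complex.exp (((u k : ℝ) : ℂ) * Complex.I) * x) atTop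
        (nhds (Complex.exp ((θ : ℂ) * Complex.I) * x)) :=
      (hcont.tendsto θ).comp hlim
    refine hKcomp.isClosed.mem_of_tendsto htend (Filter.Eventually.of_forall fun k => ?_)
    have := hu k
    simp only [hSdef, AddSubgroup.mem_mk, Set.mem_setOf_eq] at this
    rw [← this]
    exact ⟨x, hx, rfl⟩
  -- maximizer of the norm
  obtain ⟨x₀, hx₀K, hmax⟩ := hKcomp.exists_isMaxOn hne (continuous_norm.continuousOn)
  refine ⟨‖x₀‖, norm_nonneg x₀, ?_⟩
  have hcirc : ∀ p : ℂ, ‖p‖ = ‖x₀‖ → p ∈ K := by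
    intro p hp
    by_cases h0 : x₀ = 0
    · have : p = 0 := by
        rw [h0] at hp; simpa using hp
      rw [this, ← h0]; exact hx₀K
    · set c := p / x₀ with hc
      have habs : ‖c‖ = 1 := by
        rw [hc, norm_div, hp, div_self (by simpa using h0)]
      have hcexp : Complex.exp ((Complex.arg c : ℂ) * Complex.I) = c := by
        have := Complex.norm_mul_exp_arg_mul_I c
        rwa [habs, Complex.ofReal_one, one_mul] at this
      have : Complex.exp ((Complex.arg c : ℂ) * Complex.I) * x₀ ∈ K := hAll _ x₀ hx₀K
      rwa [hcexp, hc, div_mul_cancel₀ _ h0] at this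
  ext y
  simp only [Set.mem_setOf_eq]
  constructor
  · intro hy; exact hmax hy
  · intro hy
    by_cases hy0 : y = 0
    · -- 0 is midpoint of x₀ and -x₀
      have hneg : -x₀ ∈ K := hcirc _ (by simp)
      have := hKconv hx₀K hneg (by norm_num : (0:ℝ) ≤ 1/2) (by norm_num : (0:ℝ) ≤ 1/2)
        (by norm_num)
      have heq : (1/2 : ℝ) • x₀ + (1/2 : ℝ) • (-x₀) = 0 := by
        rw [smul_neg, add_neg_cancel]
      rw [heq] at this
      rwa [hy0]
    · have hylt : 0 < ‖y‖ := by simpa using hy0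
      have hR : 0 < ‖x₀‖ := lt_of_lt_of_le hylt hy
      set R := ‖x₀‖
      set p : ℂ := ((R / ‖y‖ : ℝ) : ℂ) * y with hpdef
      have hpabs : ‖p‖ = R := by
        rw [hpdef, norm_mul, Complex.norm_real, Real.norm_eq_abs, abs_of_pos (by positivity)]
        field_simp
      have hpK : p ∈ K := hcirc p hpabs
      have hnpK : -p ∈ K := hcirc (-p) (by simpa using hpabs)
      set t : ℝ := (R + ‖y‖) / (2 * R) with htdef
      have ht0 : 0 ≤ t := by positivity
      have ht1 : 0 ≤ 1 - t := by
        rw [htdef, sub_nonneg, div_le_one (by positivity)]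
        linarith
      have hsum : t + (1 - t) = 1 := by ring
      have hmem := hKconv hpK hnpK ht0 ht1 hsum
      have heq : t • p + (1 - t) • (-p) = y := by
        rw [hpdef]
        have hyne : (‖y‖ : ℝ) ≠ 0 := ne_of_gt hylt
        have hRne : (R : ℝ) ≠ 0 := ne_of_gt hR
        rw [Complex.real_smul, Complex.real_smul, htdef]
        have : (((R + ‖y‖) / (2 * R) : ℝ) : ℂ) * (((R / ‖y‖ : ℝ) : ℂ) * y)
            + ((1 - (R + ‖y‖) / (2 * R) : ℝ) : ℂ) * -(((R / ‖y‖ : ℝ) : ℂ) * y)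
            = ((((R + ‖y‖) / (2 * R)) * (R / ‖y‖)
              - (1 - (R + ‖y‖) / (2 * R)) * (R / ‖y‖) : ℝ) : ℂ) * y := by
          push_cast; ring
        rw [this]
        have harith : (((R + ‖y‖) / (2 * R)) * (R / ‖y‖)
              - (1 - (R + ‖y‖) / (2 * R)) * (R / ‖y‖) : ℝ) = 1 := by
          field_simp
          ring
        rw [harith]; simp
      rwa [heq] at hmem
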